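/- Let f : ℝ → ℝ be four times continuously differentiable on a neighbourhood of r, with f(r) = 0 and f'(r) ≠ 0. Then there exist δ > 0 and C > 0 such that for all real u, v with 0 < |u| ≤ δ, 0 < |v| ≤ δ and u ≠ v, one has f(r+u) ≠ f(r+v), f'(r+u) ≠ 0, f'(r+v) ≠ 0, and the ICI iterate Φ computed from the data (r+u, f(r+u), f'(r+u)) and (r+v, f(r+v), f'(r+v)) satisfies |Φ − r| ≤ C·(|u|·|v|)². -/

import Mathlib

open Set Filter Topology

noncomputable def quartic (c0 c1 c2 c3 c4 : ℝ) : ℝ → ℝ :=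
  fun t => c0 + c1*t + c2*t^2 + c3*t^3 + c4*t^4

lemma quartic_hasDerivAt (c0 c1 c2 c3 c4 t : ℝ) :
    HasDerivAt (quartic c0 c1 c2 c3 c4) (quartic c1 (2*c2) (3*c3) (4*c4) 0 t) t := by
  have h := (((((hasDerivAt_const t c0).add ((hasDerivAt_id' t).const_mul c1)).add
    ((hasDerivAt_pow 2 t).const_mul c2)).add ((hasDerivAt_pow 3 t).const_mul c3)).add
    ((hasDerivAt_pow 4 t).const_mul c4))
  convert h using 1
  · rfl
  · rfl
  · rfl
  norm_num [quartic]
  ring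

section helpers
variable {U : Set ℝ}

lemma rolle_aux {ψ ψ' : ℝ → ℝ}
    (hd : ∀ t ∈ U, HasDerivAt ψ (ψ' t) t) {a b : ℝ} (hab : a < b)
    (hsub : Icc a b ⊆ U) (ha : ψ a = 0) (hb : ψ b = 0) :
    ∃ c ∈ Ioo a b, ψ' c = 0 := by
  have hc : ContinuousOn ψ (Icc a b) :=
    fun t ht => ((hd t (hsub ht)).continuousAt).continuousWithinAt
  obtain ⟨c, hc1, hc2⟩ := exists_deriv_eq_zero hab hc (ha.trans hb.symm)
  refine ⟨c, hc1, ?_⟩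
  rw [← (hd c (hsub ⟨hc1.1.le, hc1.2.le⟩)).deriv]
  exact hc2

lemma descend3 {ψ1 ψ2 ψ3 ψ4 : ℝ → ℝ}
    (h1 : ∀ t ∈ U, HasDerivAt ψ1 (ψ2 t) t)
    (h2 : ∀ t ∈ U, HasDerivAt ψ2 (ψ3 t) t)
    (h3 : ∀ t ∈ U, HasDerivAt ψ3 (ψ4 t) t)
    {a1 a2 a3 a4 : ℝ} (h12 : a1 < a2) (h23 : a2 < a3) (h34 : a3 < a4)
    (hsub : Icc a1 a4 ⊆ U)
    (z1 : ψ1 a1 = 0) (z2 : ψ1 a2 = 0) (z3 : ψ1 a3 = 0) (z4 : ψ1 a4 = 0) :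
    ∃ ξ ∈ Icc a1 a4, ψ4 ξ = 0 := by
  have s12 : Icc a1 a2 ⊆ U := (Icc_subset_Icc le_rfl (by linarith)).trans hsub
  have s23 : Icc a2 a3 ⊆ U := (Icc_subset_Icc (by linarith) (by linarith)).trans hsub
  have s34 : Icc a3 a4 ⊆ U := (Icc_subset_Icc (by linarith) le_rfl).trans hsub
  obtain ⟨b1, hb1, zb1⟩ := rolle_aux h1 h12 s12 z1 z2
  obtain ⟨b2, hb2, zb2⟩ := rolle_aux h1 h23 s23 z2 z3
  obtain ⟨b3, hb3, zb3⟩ := rolle_aux h1 h34 s34 z3 z4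
  have sb12 : Icc b1 b2 ⊆ U :=
    (Icc_subset_Icc (by linarith [hb1.1]) (by linarith [hb2.2])).trans hsub
  have sb23 : Icc b2 b3 ⊆ U :=
    (Icc_subset_Icc (by linarith [hb1.1, hb2.1]) (by linarith [hb3.2])).trans hsub
  obtain ⟨c1, hc1, zc1⟩ := rolle_aux h2 (by linarith [hb1.2, hb2.1]) sb12 zb1 zb2
  obtain ⟨c2, hc2, zc2⟩ := rolle_aux h2 (by linarith [hb2.2, hb3.1]) sb23 zb2 zb3
  have sc : Icc c1 c2 ⊆ U :=
    (Icc_subset_Icc (by linarith [hb1.1, hc1.1]) (by linarith [hb3.2, hc2.2])).trans hsub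
  obtain ⟨ξ, hξ, zξ⟩ := rolle_aux h3 (by linarith [hc1.2, hc2.1]) sc zc1 zc2
  exact ⟨ξ, ⟨by linarith [hb1.1, hc1.1, hξ.1], by linarith [hb3.2, hc2.2, hξ.2]⟩, zξ⟩

lemma exists_fourth_zero {φ0 φ1 φ2 φ3 φ4 : ℝ → ℝ}
    (h0 : ∀ t ∈ U, HasDerivAt φ0 (φ1 t) t) (h1 : ∀ t ∈ U, HasDerivAt φ1 (φ2 t) t)
    (h2 : ∀ t ∈ U, HasDerivAt φ2 (φ3 t) t) (h3 : ∀ t ∈ U, HasDerivAt φ3 (φ4 t) t)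
    {p q s m1 m2 : ℝ} (hpq : p < q) (hqs : q < s) (hsub : Icc p s ⊆ U)
    (zp : φ0 p = 0) (zq : φ0 q = 0) (zs : φ0 s = 0)
    (hm : (m1 = p ∧ m2 = q) ∨ (m1 = p ∧ m2 = s) ∨ (m1 = q ∧ m2 = s))
    (zm1 : φ1 m1 = 0) (zm2 : φ1 m2 = 0) :
    ∃ ξ ∈ Icc p s, φ4 ξ = 0 := by
  have spq : Icc p q ⊆ U := (Icc_subset_Icc le_rfl (by linarith)).trans hsub
  have sqs : Icc q s ⊆ U := (Icc_subset_Icc (by linarith) le_rfl).trans hsub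
  obtain ⟨ξ1, hξ1, zξ1⟩ := rolle_aux h0 hpq spq zp zq
  obtain ⟨ξ2, hξ2, zξ2⟩ := rolle_aux h0 hqs sqs zq zs
  rcases hm with ⟨e1, e2⟩ | ⟨e1, e2⟩ | ⟨e1, e2⟩ <;> subst e1 <;> subst e2
  · -- zeros p < ξ1 < q < ξ2
    obtain ⟨ξ, hξ, zξ⟩ := descend3 h1 h2 h3 hξ1.1 hξ1.2 hξ2.1
      ((Icc_subset_Icc le_rfl (by linarith [hξ2.2])).trans hsub) zm1 zξ1 zm2 zξ2
    exact ⟨ξ, ⟨hξ.1, by linarith [hξ.2, hξ2.2]⟩, zξ⟩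
  · -- zeros p < ξ1 < ξ2 < s
    obtain ⟨ξ, hξ, zξ⟩ := descend3 h1 h2 h3 hξ1.1 (by linarith [hξ1.2, hξ2.1]) hξ2.2
      hsub zm1 zξ1 zξ2 zm2
    exact ⟨ξ, hξ, zξ⟩
  · -- zeros ξ1 < q < ξ2 < s
    obtain ⟨ξ, hξ, zξ⟩ := descend3 h1 h2 h3 hξ1.2 hξ2.1 hξ2.2
      ((Icc_subset_Icc (by linarith [hξ1.1]) le_rfl).trans hsub) zξ1 zm1 zξ2 zm2
    exact ⟨ξ, ⟨by linarith [hξ.1, hξ1.1], hξ.2⟩, zξ⟩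

end helpers

noncomputable def hermite0 (A B Gy By x y : ℝ) : ℝ :=
  A - B*x + ((Gy - A)/(y - x) - B)/(y - x) * x^2 -
    ((By - (Gy - A)/(y - x))/(y - x) - ((Gy - A)/(y - x) - B)/(y - x))/(y - x) * (x^2*y)

set_option maxHeartbeats 1600000 in
lemma hermite_err_core {g : ℝ → ℝ} {U : Set ℝ} (hU : IsOpen U) (hg : ContDiffOn ℝ 4 g U)
    {η : ℝ} (hsub : Icc (-η) η ⊆ U) {M : ℝ}
    (hM : ∀ t ∈ Icc (-η) η, |deriv (deriv (deriv (deriv g))) t| ≤ M)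
    {x y : ℝ} (hx : x ∈ Icc (-η) η) (hy : y ∈ Icc (-η) η)
    (hx0 : x ≠ 0) (hy0 : y ≠ 0) (hxy : x ≠ y)
    (A B Gy By s0 C D V K q0 q1 q2 q3 : ℝ)
    (hA : A = g x) (hB : B = deriv g x) (hGy : Gy = g y) (hBy : By = deriv g y)
    (hs0 : s0 = (Gy - A)/(y - x)) (hC : C = (s0 - B)/(y - x))
    (hD : D = ((By - s0)/(y - x) - C)/(y - x))
    (hV : V = A - B*x + C * x^2 - D * (x^2*y))
    (hK : K = (g 0 - V)/(x^2*y^2))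
    (hq0 : q0 = A - B*x + C*x^2 - D*(x^2*y) + K*(x^2*y^2))
    (hq1 : q1 = B - 2*C*x + D*(x^2+2*x*y) - K*(2*x*y^2+2*x^2*y))
    (hq2 : q2 = C - D*(2*x+y) + K*(x^2+4*x*y+y^2))
    (hq3 : q3 = D - 2*K*(x+y)) :
    |g 0 - V| ≤ M * (x^2 * y^2) := by
  have hη0 : 0 < η := lt_of_lt_of_le (abs_pos.2 hx0) (abs_le.2 ⟨hx.1, hx.2⟩)
  have hyx : y - x ≠ 0 := sub_ne_zero.2 (Ne.symm hxy)
  have hx2y2 : x^2 * y^2 ≠ 0 := by positivity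
  -- interpolation / normalization conditions
  have z0x : g x - (quartic q0 q1 q2 q3 K) x = 0 := by
    rw [← hA]; simp only [quartic]
    rw [hq0, hq1, hq2, hq3]; ring
  have z0y : g y - (quartic q0 q1 q2 q3 K) y = 0 := by
    rw [← hGy]; simp only [quartic]
    rw [hq0, hq1, hq2, hq3, hD, hC, hs0]
    field_simp
    ring
  have z00 : g 0 - (quartic q0 q1 q2 q3 K) 0 = 0 := by
    simp only [quartic]
    rw [hq0, hK, hV]
    field_simp
    ring
  have z1x : deriv g x - (quartic q1 (2*q2) (3*q3) (4*K) 0) x = 0 := by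
    rw [← hB]; simp only [quartic]
    rw [hq1, hq2, hq3]; ring
  have z1y : deriv g y - (quartic q1 (2*q2) (3*q3) (4*K) 0) y = 0 := by
    rw [← hBy]; simp only [quartic]
    rw [hq1, hq2, hq3, hD, hC, hs0]
    field_simp
    ring
  -- derivative chains
  have hgc1 : ContDiffOn ℝ 3 (deriv g) U := hg.deriv_of_isOpen hU (by norm_num)
  have hgc2 : ContDiffOn ℝ 2 (deriv (deriv g)) U := hgc1.deriv_of_isOpen hU (by norm_num)
  have hgc3 : ContDiffOn ℝ 1 (deriv (deriv (deriv g))) U := hgc2.deriv_of_isOpen hU (by norm_num)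
  have hgd0 : ∀ t ∈ U, HasDerivAt g (deriv g t) t := fun t ht =>
    ((hg.differentiableOn (by norm_num)).differentiableAt (hU.mem_nhds ht)).hasDerivAt
  have hgd1 : ∀ t ∈ U, HasDerivAt (deriv g) (deriv (deriv g) t) t := fun t ht =>
    ((hgc1.differentiableOn (by norm_num)).differentiableAt (hU.mem_nhds ht)).hasDerivAt
  have hgd2 : ∀ t ∈ U, HasDerivAt (deriv (deriv g)) (deriv (deriv (deriv g)) t) t := fun t ht =>
    ((hgc2.differentiableOn (by norm_num)).differentiableAt (hU.mem_nhds ht)).hasDerivAt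
  have hgd3 : ∀ t ∈ U,
      HasDerivAt (deriv (deriv (deriv g))) (deriv (deriv (deriv (deriv g))) t) t := fun t ht =>
    ((hgc3.differentiableOn (by norm_num)).differentiableAt (hU.mem_nhds ht)).hasDerivAt
  have hφ0 : ∀ t ∈ U, HasDerivAt (fun t => g t - (quartic q0 q1 q2 q3 K) t) (deriv g t - (quartic q1 (2*q2) (3*q3) (4*K) 0) t) t :=
    fun t ht => (hgd0 t ht).sub (quartic_hasDerivAt _ _ _ _ _ t)
  have hφ1 : ∀ t ∈ U, HasDerivAt (fun t => deriv g t - (quartic q1 (2*q2) (3*q3) (4*K) 0) t) (deriv (deriv g) t - (quartic (2*q2) (2*(3*q3)) (3*(4*K)) (4*0) 0) t) t :=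
    fun t ht => (hgd1 t ht).sub (quartic_hasDerivAt _ _ _ _ _ t)
  have hφ2 : ∀ t ∈ U,
      HasDerivAt (fun t => deriv (deriv g) t - (quartic (2*q2) (2*(3*q3)) (3*(4*K)) (4*0) 0) t) (deriv (deriv (deriv g)) t - (quartic (2*(3*q3)) (2*(3*(4*K))) (3*(4*0)) (4*0) 0) t) t :=
    fun t ht => (hgd2 t ht).sub (quartic_hasDerivAt _ _ _ _ _ t)
  have hφ3 : ∀ t ∈ U, HasDerivAt (fun t => deriv (deriv (deriv g)) t - (quartic (2*(3*q3)) (2*(3*(4*K))) (3*(4*0)) (4*0) 0) t)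
      (deriv (deriv (deriv (deriv g))) t - (quartic (2*(3*(4*K))) (2*(3*(4*0))) (3*(4*0)) (4*0) 0) t) t :=
    fun t ht => (hgd3 t ht).sub (quartic_hasDerivAt _ _ _ _ _ t)
  have key : ∃ ξ ∈ Icc (-η) η, deriv (deriv (deriv (deriv g))) ξ - (quartic (2*(3*(4*K))) (2*(3*(4*0))) (3*(4*0)) (4*0) 0) ξ = 0 := by
    rcases hxy.lt_or_gt with hlt | hlt
    · rcases hx0.lt_or_gt with hx' | hx'
      · rcases hy0.lt_or_gt with hy' | hy'
        · -- x < y < 0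
          have hs : Icc x (0:ℝ) ⊆ Icc (-η) η := Icc_subset_Icc hx.1 hη0.le
          obtain ⟨ξ, hξ, zξ⟩ := exists_fourth_zero hφ0 hφ1 hφ2 hφ3 hlt hy'
            (hs.trans hsub) z0x z0y z00 (Or.inl ⟨rfl, rfl⟩) z1x z1y
          exact ⟨ξ, hs hξ, zξ⟩
        · -- x < 0 < y
          have hs : Icc x y ⊆ Icc (-η) η := Icc_subset_Icc hx.1 hy.2
          obtain ⟨ξ, hξ, zξ⟩ := exists_fourth_zero hφ0 hφ1 hφ2 hφ3 hx' hy'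
            (hs.trans hsub) z0x z00 z0y (Or.inr (Or.inl ⟨rfl, rfl⟩)) z1x z1y
          exact ⟨ξ, hs hξ, zξ⟩
      · -- 0 < x < y
        have hs : Icc (0:ℝ) y ⊆ Icc (-η) η := Icc_subset_Icc (by linarith) hy.2
        obtain ⟨ξ, hξ, zξ⟩ := exists_fourth_zero hφ0 hφ1 hφ2 hφ3 hx' hlt
          (hs.trans hsub) z00 z0x z0y (Or.inr (Or.inr ⟨rfl, rfl⟩)) z1x z1y
        exact ⟨ξ, hs hξ, zξ⟩
    · rcases hy0.lt_or_gt with hy' | hy'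
      · rcases hx0.lt_or_gt with hx' | hx'
        · -- y < x < 0
          have hs : Icc y (0:ℝ) ⊆ Icc (-η) η := Icc_subset_Icc hy.1 hη0.le
          obtain ⟨ξ, hξ, zξ⟩ := exists_fourth_zero hφ0 hφ1 hφ2 hφ3 hlt hx'
            (hs.trans hsub) z0y z0x z00 (Or.inl ⟨rfl, rfl⟩) z1y z1x
          exact ⟨ξ, hs hξ, zξ⟩
        · -- y < 0 < x
          have hs : Icc y x ⊆ Icc (-η) η := Icc_subset_Icc hy.1 hx.2
          obtain ⟨ξ, hξ, zξ⟩ := exists_fourth_zero hφ0 hφ1 hφ2 hφ3 hy' hx'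
            (hs.trans hsub) z0y z00 z0x (Or.inr (Or.inl ⟨rfl, rfl⟩)) z1y z1x
          exact ⟨ξ, hs hξ, zξ⟩
      · -- 0 < y < x
        have hs : Icc (0:ℝ) x ⊆ Icc (-η) η := Icc_subset_Icc (by linarith) hx.2
        obtain ⟨ξ, hξ, zξ⟩ := exists_fourth_zero hφ0 hφ1 hφ2 hφ3 hy' hlt
          (hs.trans hsub) z00 z0y z0x (Or.inr (Or.inr ⟨rfl, rfl⟩)) z1y z1x
        exact ⟨ξ, hs hξ, zξ⟩
  obtain ⟨ξ, hξ, zξ⟩ := key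
  have hQ4ξ : (quartic (2*(3*(4*K))) (2*(3*(4*0))) (3*(4*0)) (4*0) 0) ξ = 24*K := by
    simp only [quartic]; ring
  have h24 : |24*K| ≤ M := by
    rw [← hQ4ξ, ← show deriv (deriv (deriv (deriv g))) ξ = (quartic (2*(3*(4*K))) (2*(3*(4*0))) (3*(4*0)) (4*0) 0) ξ by linarith [zξ]]
    exact hM ξ hξ
  have hKM : |K| ≤ M := by
    rw [abs_mul] at h24
    have h0 : |(24:ℝ)| = 24 := by norm_num
    rw [h0] at h24
    have := abs_nonneg K
    linarith
  have hgv : g 0 - V = K * (x^2*y^2) := by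
    rw [hK]; field_simp
  rw [hgv, abs_mul, abs_of_nonneg (by positivity : (0:ℝ) ≤ x^2*y^2)]
  exact mul_le_mul_of_nonneg_right hKM (by positivity)

lemma hermite_err {g : ℝ → ℝ} {U : Set ℝ} (hU : IsOpen U) (hg : ContDiffOn ℝ 4 g U)
    {η : ℝ} (hsub : Icc (-η) η ⊆ U) {M : ℝ}
    (hM : ∀ t ∈ Icc (-η) η, |deriv (deriv (deriv (deriv g))) t| ≤ M)
    {x y : ℝ} (hx : x ∈ Icc (-η) η) (hy : y ∈ Icc (-η) η)
    (hx0 : x ≠ 0) (hy0 : y ≠ 0) (hxy : x ≠ y) :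
    |g 0 - hermite0 (g x) (deriv g x) (g y) (deriv g y) x y| ≤ M * (x^2 * y^2) := by
  have := hermite_err_core hU hg hsub hM hx hy hx0 hy0 hxy
    (g x) (deriv g x) (g y) (deriv g y) _ _ _ _ _ _ _ _ _
    rfl rfl rfl rfl rfl rfl rfl rfl rfl rfl rfl rfl rfl
  simpa [hermite0] using this

/-- The Inverse Cubic Iteration formula Φ(a, ya, da; b, yb, db). -/
noncomputable def ICI (a ya da b yb db : ℝ) : ℝ :=
  yb^2 / (ya - yb)^2 * (a - ya / da)
    + ya^2 / (ya - yb)^2 * (b - yb / db)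
    - 2 * ya * yb / (ya - yb)^2 * (b - yb * (b - a) / (yb - ya))

lemma hermite0_eq_ICI (a da b db x y : ℝ) (hxy : x ≠ y) (hda : da ≠ 0) (hdb : db ≠ 0) :
    hermite0 a da⁻¹ b db⁻¹ x y = ICI a x da b y db := by
  have hyx : y - x ≠ 0 := sub_ne_zero.2 (Ne.symm hxy)
  have hxy' : x - y ≠ 0 := sub_ne_zero.2 hxy
  unfold hermite0 ICI
  field_simp
  ring



/-- The error of the new ICI iterate is of the order of the square of the
product of the two previous errors (quantitative form of equation (5)). -/
theorem ICI_error_bound (f : ℝ → ℝ) (r : ℝ)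
    (hf : ∃ U ∈ nhds r, ContDiffOn ℝ 4 f U)
    (hroot : f r = 0) (hd : deriv f r ≠ 0) :
    ∃ δ > 0, ∃ C > 0, ∀ u v : ℝ,
      0 < |u| → |u| ≤ δ → 0 < |v| → |v| ≤ δ → u ≠ v →
      f (r + u) ≠ f (r + v) ∧ deriv f (r + u) ≠ 0 ∧ deriv f (r + v) ≠ 0 ∧
      |ICI (r + u) (f (r + u)) (deriv f (r + u))
           (r + v) (f (r + v)) (deriv f (r + v)) - r| ≤ C * (|u| * |v|)^2 := by
  obtain ⟨U0, hU0n, hfC0⟩ := hf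
  have hfr : ContDiffAt ℝ 4 f r := hfC0.contDiffAt hU0n
  have hdf : HasDerivAt f (deriv f r) r := (hfr.differentiableAt (by norm_num)).hasDerivAt
  have hn1 : (4 : WithTop ℕ∞) ≠ 0 := by norm_num
  have hF : HasFDerivAt f
      ((ContinuousLinearEquiv.unitsEquivAut ℝ (Units.mk0 (deriv f r) hd)) : ℝ →L[ℝ] ℝ) r :=
    hdf.hasFDerivAt_equiv hd
  set g := hfr.localInverse hF hn1 with hgdef
  have hgC : ContDiffAt ℝ 4 g (f r) := hfr.to_localInverse hF hn1
  have hleft : ∀ᶠ t in 𝓝 r, g (f t) = t :=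
    (hfr.hasStrictFDerivAt' hF hn1).eventually_left_inverse
  have hg0 : g 0 = r := by rw [← hroot]; exact hleft.self_of_nhds
  rw [hroot] at hgC
  obtain ⟨u0, hu0n, hgu⟩ := hgC.contDiffOn le_rfl (by simp)
  have hUgopen : IsOpen (interior u0) := isOpen_interior
  have h0Ug : (0:ℝ) ∈ interior u0 := mem_interior_iff_mem_nhds.2 hu0n
  have hgU : ContDiffOn ℝ 4 g (interior u0) := hgu.mono interior_subset
  obtain ⟨ε, hε, hball⟩ := Metric.isOpen_iff.1 hUgopen 0 h0Ug
  set η := ε/2 with hη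
  have hηpos : 0 < η := by positivity
  have hIcc : Icc (-η) η ⊆ interior u0 := by
    intro t ht
    apply hball
    rw [Metric.mem_ball, Real.dist_eq, sub_zero]
    have : |t| ≤ η := abs_le.2 ⟨ht.1, ht.2⟩
    have h2 : η < ε := by rw [hη]; linarith
    linarith
  have hgc1 : ContDiffOn ℝ 3 (deriv g) (interior u0) := hgU.deriv_of_isOpen hUgopen (by norm_num)
  have hgc2 : ContDiffOn ℝ 2 (deriv (deriv g)) (interior u0) :=
    hgc1.deriv_of_isOpen hUgopen (by norm_num)
  have hgc3 : ContDiffOn ℝ 1 (deriv (deriv (deriv g))) (interior u0) :=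
    hgc2.deriv_of_isOpen hUgopen (by norm_num)
  have hg4cont : ContinuousOn (deriv (deriv (deriv (deriv g)))) (interior u0) :=
    hgc3.continuousOn_deriv_of_isOpen hUgopen le_rfl
  obtain ⟨M0, hM0⟩ := isCompact_Icc.exists_bound_of_continuousOn (hg4cont.mono hIcc)
  set M := max M0 0 with hM
  have hMnn : 0 ≤ M := le_max_right _ _
  have hMbd : ∀ t ∈ Icc (-η) η, |deriv (deriv (deriv (deriv g))) t| ≤ M := by
    intro t ht
    have := hM0 t ht
    rw [Real.norm_eq_abs] at this
    exact this.trans (le_max_left _ _)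
  -- f side
  have hUfopen : IsOpen (interior U0) := isOpen_interior
  have hrUf : r ∈ interior U0 := mem_interior_iff_mem_nhds.2 hU0n
  have hfC : ContDiffOn ℝ 4 f (interior U0) := hfC0.mono interior_subset
  have hf'cont : ContinuousOn (deriv f) (interior U0) :=
    hfC.continuousOn_deriv_of_isOpen hUfopen (by norm_num)
  have hf'at : ContinuousAt (deriv f) r := hf'cont.continuousAt (hUfopen.mem_nhds hrUf)
  have hsgn : ∀ᶠ t in 𝓝 r, |deriv f t - deriv f r| < |deriv f r| := by
    have := Metric.tendsto_nhds.1 hf'at |deriv f r| (abs_pos.2 hd)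
    simpa [Real.dist_eq] using this
  have hNmem : (interior U0 ∩ ({t | g (f t) = t} ∩
      {t | |deriv f t - deriv f r| < |deriv f r|})) ∈ 𝓝 r :=
    inter_mem (hUfopen.mem_nhds hrUf) (inter_mem hleft hsgn)
  obtain ⟨ρ0, hρ0, hballr⟩ := Metric.mem_nhds_iff.1 hNmem
  set ρ := ρ0/2 with hρ
  have hρpos : 0 < ρ := by positivity
  have hIccball : ∀ t ∈ Icc (r-ρ) (r+ρ), t ∈ Metric.ball r ρ0 := by
    intro t ht
    rw [Metric.mem_ball, Real.dist_eq]
    have h1 : |t - r| ≤ ρ := abs_le.2 ⟨by linarith [ht.1], by linarith [ht.2]⟩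
    rw [hρ] at h1
    linarith
  have hIccr : ∀ t ∈ Icc (r-ρ) (r+ρ), t ∈ interior U0 ∧ g (f t) = t ∧
      |deriv f t - deriv f r| < |deriv f r| := fun t ht => hballr (hIccball t ht)
  have hIU : Icc (r-ρ) (r+ρ) ⊆ interior U0 := fun t ht => (hIccr t ht).1
  have hfne : ∀ t ∈ Icc (r-ρ) (r+ρ), deriv f t ≠ 0 := by
    intro t ht h0
    have h1 := (hIccr t ht).2.2
    rw [h0] at h1
    simp at h1
  have hfdiff : ∀ t ∈ Icc (r-ρ) (r+ρ), HasDerivAt f (deriv f t) t := fun t ht =>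
    ((hfC.differentiableOn (by norm_num)).differentiableAt
      (hUfopen.mem_nhds (hIU ht))).hasDerivAt
  have hfcont : ContinuousOn f (Icc (r-ρ) (r+ρ)) := fun t ht =>
    (hfdiff t ht).continuousAt.continuousWithinAt
  have hinj : InjOn f (Icc (r-ρ) (r+ρ)) := by
    rcases hd.lt_or_gt with hneg | hpos
    · refine (strictAntiOn_of_deriv_neg (convex_Icc _ _) hfcont ?_).injOn
      intro t ht
      have h1 := abs_lt.1 (hIccr t (interior_subset ht)).2.2
      have h2 := abs_of_neg hneg
      linarith [h1.2]
    · refine (strictMonoOn_of_deriv_pos (convex_Icc _ _) hfcont ?_).injOn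
      intro t ht
      have h1 := abs_lt.1 (hIccr t (interior_subset ht)).2.2
      have h2 := abs_of_pos hpos
      linarith [h1.1]
  obtain ⟨L0, hL0⟩ := isCompact_Icc.exists_bound_of_continuousOn (hf'cont.mono hIU)
  set L := max L0 1 with hL
  have hLpos : (0:ℝ) < L := lt_of_lt_of_le one_pos (le_max_right _ _)
  have hrI : r ∈ Icc (r-ρ) (r+ρ) := ⟨by linarith, by linarith⟩
  have hlip : ∀ t ∈ Icc (r-ρ) (r+ρ), |f t| ≤ L * |t - r| := by
    intro t ht
    have key := Convex.norm_image_sub_le_of_norm_hasDerivWithin_le (C := L) (f' := deriv f)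
      (fun s hs => (hfdiff s hs).hasDerivWithinAt)
      (fun s hs => (hL0 s hs).trans (le_max_left _ _))
      (convex_Icc _ _) hrI ht
    rw [Real.norm_eq_abs, Real.norm_eq_abs, hroot, sub_zero] at key
    exact key
  refine ⟨min ρ (η/L), lt_min hρpos (div_pos hηpos hLpos), M * L^4 + 1,
    by nlinarith [mul_nonneg hMnn (le_of_lt (pow_pos hLpos 4))], fun u v hu huδ hv hvδ huv => ?_⟩
  have hau : r + u ∈ Icc (r-ρ) (r+ρ) := by
    have h1 : |u| ≤ ρ := le_trans huδ (min_le_left _ _)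
    have h2 := abs_le.1 h1
    exact ⟨by linarith [h2.1], by linarith [h2.2]⟩
  have hbv : r + v ∈ Icc (r-ρ) (r+ρ) := by
    have h1 : |v| ≤ ρ := le_trans hvδ (min_le_left _ _)
    have h2 := abs_le.1 h1
    exact ⟨by linarith [h2.1], by linarith [h2.2]⟩
  have hune : u ≠ 0 := abs_pos.1 hu
  have hvne : v ≠ 0 := abs_pos.1 hv
  have hya0 : f (r + u) ≠ 0 := by
    intro h
    apply hune
    have h2 : f (r + u) = f r := by rw [h, hroot]
    have := hinj hau hrI h2
    linarith [this]
  have hyb0 : f (r + v) ≠ 0 := by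
    intro h
    apply hvne
    have h2 : f (r + v) = f r := by rw [h, hroot]
    have := hinj hbv hrI h2
    linarith [this]
  have hyab : f (r + u) ≠ f (r + v) := by
    intro h
    apply huv
    have := hinj hau hbv h
    linarith [this]
  have hda : deriv f (r + u) ≠ 0 := hfne _ hau
  have hdb : deriv f (r + v) ≠ 0 := hfne _ hbv
  have hyabd : |f (r + u)| ≤ L * |u| := by
    have := hlip (r + u) hau
    simpa using this
  have hybbd : |f (r + v)| ≤ L * |v| := by
    have := hlip (r + v) hbv
    simpa using this
  have hLu : L * |u| ≤ η := by
    have h1 : |u| ≤ η/L := le_trans huδ (min_le_right _ _)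
    calc L * |u| ≤ L * (η/L) := by nlinarith
    _ = η := by field_simp
  have hLv : L * |v| ≤ η := by
    have h1 : |v| ≤ η/L := le_trans hvδ (min_le_right _ _)
    calc L * |v| ≤ L * (η/L) := by nlinarith
    _ = η := by field_simp
  have hya_mem : f (r + u) ∈ Icc (-η) η := by
    have := abs_le.1 (hyabd.trans hLu)
    exact ⟨this.1, this.2⟩
  have hyb_mem : f (r + v) ∈ Icc (-η) η := by
    have := abs_le.1 (hybbd.trans hLv)
    exact ⟨this.1, this.2⟩
  have gfa : g (f (r + u)) = r + u := (hIccr _ hau).2.1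
  have gfb : g (f (r + v)) = r + v := (hIccr _ hbv).2.1
  -- derivative of the inverse
  have hgdiffa : HasDerivAt g (deriv g (f (r + u))) (f (r + u)) :=
    ((hgU.differentiableOn (by norm_num)).differentiableAt
      (hUgopen.mem_nhds (hIcc hya_mem))).hasDerivAt
  have hgdiffb : HasDerivAt g (deriv g (f (r + v))) (f (r + v)) :=
    ((hgU.differentiableOn (by norm_num)).differentiableAt
      (hUgopen.mem_nhds (hIcc hyb_mem))).hasDerivAt
  have heqa : (g ∘ f) =ᶠ[𝓝 (r + u)] id := by
    filter_upwards [Metric.isOpen_ball.mem_nhds (hIccball _ hau)] with t ht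
    exact (hballr ht).2.1
  have heqb : (g ∘ f) =ᶠ[𝓝 (r + v)] id := by
    filter_upwards [Metric.isOpen_ball.mem_nhds (hIccball _ hbv)] with t ht
    exact (hballr ht).2.1
  have huniqa : deriv g (f (r + u)) * deriv f (r + u) = 1 := by
    have hcomp : HasDerivAt (g ∘ f) (deriv g (f (r + u)) * deriv f (r + u)) (r + u) :=
      hgdiffa.comp _ (hfdiff _ hau)
    exact (hcomp.congr_of_eventuallyEq heqa.symm).unique (hasDerivAt_id _)
  have huniqb : deriv g (f (r + v)) * deriv f (r + v) = 1 := by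
    have hcomp : HasDerivAt (g ∘ f) (deriv g (f (r + v)) * deriv f (r + v)) (r + v) :=
      hgdiffb.comp _ (hfdiff _ hbv)
    exact (hcomp.congr_of_eventuallyEq heqb.symm).unique (hasDerivAt_id _)
  have dgya : deriv g (f (r + u)) = (deriv f (r + u))⁻¹ := by
    rw [← one_div]; exact (eq_div_iff hda).2 huniqa
  have dgyb : deriv g (f (r + v)) = (deriv f (r + v))⁻¹ := by
    rw [← one_div]; exact (eq_div_iff hdb).2 huniqb
  have herm := hermite_err hUgopen hgU hIcc hMbd hya_mem hyb_mem hya0 hyb0 hyab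
  rw [hg0, gfa, gfb, dgya, dgyb,
    hermite0_eq_ICI (r + u) (deriv f (r + u)) (r + v) (deriv f (r + v))
      (f (r + u)) (f (r + v)) hyab hda hdb] at herm
  refine ⟨hyab, hda, hdb, ?_⟩
  rw [abs_sub_comm]
  refine herm.trans ?_
  have e1 : (f (r + u))^2 ≤ (L*|u|)^2 := by
    rw [← sq_abs (f (r + u))]
    exact pow_le_pow_left₀ (abs_nonneg _) hyabd 2
  have e2 : (f (r + v))^2 ≤ (L*|v|)^2 := by
    rw [← sq_abs (f (r + v))]
    exact pow_le_pow_left₀ (abs_nonneg _) hybbd 2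
  calc M * ((f (r + u))^2 * (f (r + v))^2)
      ≤ M * ((L*|u|)^2 * (L*|v|)^2) := by
        refine mul_le_mul_of_nonneg_left ?_ hMnn
        exact mul_le_mul e1 e2 (by positivity) (by positivity)
    _ = M * L^4 * (|u| * |v|)^2 := by ring
    _ ≤ (M * L^4 + 1) * (|u| * |v|)^2 := by nlinarith [sq_nonneg (|u| * |v|)]
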